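/- For A > 0, C > 0, and A = C^2/|B| with B < 0, the line-shock profile U(ξ) = A^{1/q} / (C(1 + exp(−q√A ξ)))^{1/q}, q a positive integer, satisfies (U')^2 = A U^2 − B U^{2q+2} − 2C U^{q+2} for all real ξ, and moreover U(ξ) → 0 as ξ → −∞ and U(ξ) → (A/C)^{1/q} as ξ → +∞. -/

import Mathlib

/-- For B < 0, C > 0 and A = C²/|B|, the line-shock profile
U(ξ) = A^{1/q} / (C(1 + exp(−q√A ξ)))^{1/q}, q a positive integer, satisfies
(U')² = A U² − B U^{2q+2} − 2C U^{q+2} for all real ξ, with U → 0 as ξ → −∞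
and U → (A/C)^{1/q} as ξ → +∞. -/
theorem stmt5 (q : ℕ) (hq : 0 < q) (B C : ℝ) (hB : B < 0) (hC : 0 < C)
    (A : ℝ) (hA : A = C ^ 2 / |B|)
    (U : ℝ → ℝ)
    (hU : U = fun ξ => A ^ ((1 : ℝ) / q) /
        (C * (1 + Real.exp (-(q * Real.sqrt A * ξ)))) ^ ((1 : ℝ) / q)) :
    (∀ ξ : ℝ, (deriv U ξ) ^ 2
        = A * U ξ ^ 2 - B * U ξ ^ (2 * q + 2) - 2 * C * U ξ ^ (q + 2)) ∧
    Filter.Tendsto U Filter.atBot (nhds 0) ∧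
    Filter.Tendsto U Filter.atTop (nhds ((A / C) ^ ((1 : ℝ) / q))) := by
  have hA0 : 0 < A := by
    rw [hA]; exact div_pos (pow_pos hC 2) (abs_pos.mpr hB.ne)
  have hqR : (0:ℝ) < (q:ℝ) := by exact_mod_cast hq
  have hsA : 0 < Real.sqrt A := Real.sqrt_pos.mpr hA0
  have hsA2 : Real.sqrt A ^ 2 = A := Real.sq_sqrt hA0.le
  have hAB : A * B = -C ^ 2 := by
    rw [hA, abs_of_neg hB]
    field_simp
    rw [div_self hB.ne]
  set s : ℝ := (q : ℝ) * Real.sqrt A with hs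
  have hs0 : 0 < s := mul_pos hqR hsA
  set a : ℝ := A ^ ((1:ℝ)/q) with ha
  have ha0 : 0 < a := Real.rpow_pos_of_pos hA0 _
  have haq : a ^ q = A := by
    rw [ha, ← Real.rpow_natCast (A ^ ((1:ℝ)/q)) q, ← Real.rpow_mul hA0.le,
      one_div_mul_cancel hqR.ne', Real.rpow_one]
  -- positivity of the inner function
  have hgpos : ∀ ξ : ℝ, 0 < C * (1 + Real.exp (-(s * ξ))) := fun ξ =>
    mul_pos hC (by positivity)
  constructor
  · intro ξ
    set E : ℝ := Real.exp (-(s * ξ)) with hE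
    have hE0 : 0 < E := Real.exp_pos _
    have hg0 : 0 < C * (1 + E) := hgpos ξ
    set G : ℝ := (C * (1 + E)) ^ ((1:ℝ)/q) with hG
    have hG0 : 0 < G := Real.rpow_pos_of_pos hg0 _
    have hGq : G ^ q = C * (1 + E) := by
      rw [hG, ← Real.rpow_natCast ((C * (1+E)) ^ ((1:ℝ)/q)) q, ← Real.rpow_mul hg0.le,
        one_div_mul_cancel hqR.ne', Real.rpow_one]
    -- derivative of the inner function
    have hinner : HasDerivAt (fun ξ => C * (1 + Real.exp (-(s * ξ))))
        (C * (Real.exp (-(s * ξ)) * (-s))) ξ := by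
      have h1 : HasDerivAt (fun ξ : ℝ => -(s * ξ)) (-s) ξ := by
        exact ((hasDerivAt_id ξ).const_mul s).neg.congr_deriv (by simp)
      exact ((h1.exp).const_add 1).const_mul C
    have hrpow : HasDerivAt (fun ξ => (C * (1 + Real.exp (-(s * ξ)))) ^ ((1:ℝ)/q))
        ((C * (E * (-s))) * ((1:ℝ)/q) * (C * (1 + E)) ^ ((1:ℝ)/q - 1)) ξ :=
      hinner.rpow_const (Or.inl hg0.ne')
    have hdiv : HasDerivAt U
        ((0 * G - a * ((C * (E * (-s))) * ((1:ℝ)/q) * (C * (1 + E)) ^ ((1:ℝ)/q - 1))) / G ^ 2)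
        ξ := by
      rw [hU]
      exact (hasDerivAt_const ξ a).div hrpow hG0.ne'
    have hpow1 : (C * (1 + E)) ^ ((1:ℝ)/q - 1) = G / (C * (1 + E)) := by
      rw [Real.rpow_sub hg0, Real.rpow_one, hG]
    have hderiv : deriv U ξ = a * C * E * Real.sqrt A / ((C * (1 + E)) * G) := by
      rw [hdiv.deriv, hpow1, hs]
      field_simp
      ring
    have hUξ : U ξ = a / G := by rw [hU]
    have hUq : U ξ ^ q = A / (C * (1 + E)) := by
      rw [hUξ, div_pow, haq, hGq]
    have h2q : U ξ ^ (2 * q + 2) = (A / (C * (1 + E))) ^ 2 * U ξ ^ 2 := by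
      rw [← hUq]; ring
    have hq2 : U ξ ^ (q + 2) = (A / (C * (1 + E))) * U ξ ^ 2 := by
      rw [← hUq]; ring
    have hBval : B = -C ^ 2 / A := by
      rw [eq_div_iff hA0.ne']
      linear_combination hAB
    rw [hderiv, h2q, hq2, hUξ, hBval, div_pow, mul_pow, mul_pow, mul_pow, hsA2]
    field_simp
    ring
  constructor
  · -- limit at -∞
    have hexp : Filter.Tendsto (fun ξ : ℝ => Real.exp (-(s * ξ))) Filter.atBot Filter.atTop := by
      apply Real.tendsto_exp_atTop.comp
      have : Filter.Tendsto (fun ξ : ℝ => s * -ξ) Filter.atBot Filter.atTop :=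
        Filter.Tendsto.const_mul_atTop hs0 Filter.tendsto_neg_atBot_atTop
      simpa [mul_neg, neg_neg] using this
    have hbig : Filter.Tendsto (fun ξ : ℝ => (C * (1 + Real.exp (-(s * ξ)))) ^ ((1:ℝ)/q))
        Filter.atBot Filter.atTop := by
      apply (tendsto_rpow_atTop (by positivity : (0:ℝ) < 1/(q:ℝ))).comp
      exact ((Filter.tendsto_atTop_add_const_left _ 1 hexp).const_mul_atTop hC)
    rw [hU]
    exact Filter.Tendsto.div_atTop tendsto_const_nhds hbig
  · -- limit at +∞
    have hexp : Filter.Tendsto (fun ξ : ℝ => Real.exp (-(s * ξ))) Filter.atTop (nhds 0) := by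
      apply Real.tendsto_exp_atBot.comp
      have : Filter.Tendsto (fun ξ : ℝ => s * ξ) Filter.atTop Filter.atTop :=
        Filter.Tendsto.const_mul_atTop hs0 Filter.tendsto_id
      simpa using this
    have h1 : Filter.Tendsto (fun ξ : ℝ => C * (1 + Real.exp (-(s * ξ))))
        Filter.atTop (nhds C) := by
      have := (tendsto_const_nhds (x := (1:ℝ)).add hexp).const_mul C
      simpa using this
    have h2 : Filter.Tendsto (fun ξ : ℝ => (C * (1 + Real.exp (-(s * ξ)))) ^ ((1:ℝ)/q))
        Filter.atTop (nhds (C ^ ((1:ℝ)/q))) :=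
      ((Real.continuousAt_rpow_const C _ (Or.inl hC.ne')).tendsto).comp h1
    have hC1 : C ^ ((1:ℝ)/q) ≠ 0 := (Real.rpow_pos_of_pos hC _).ne'
    have h3 : Filter.Tendsto U Filter.atTop (nhds (a / C ^ ((1:ℝ)/q))) := by
      rw [hU]
      exact tendsto_const_nhds.div h2 hC1
    convert h3 using 2
    rw [ha, Real.div_rpow hA0.le hC.le]
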